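/- As x → ∞, the sum ∑_{q=1}^{⌊x⌋} φ(q) is asymptotic to 3x²/π², i.e., the ratio of the sum to 3x²/π² tends to 1. -/

import Mathlib

open Filter Topology ArithmeticFunction LSeries.notation
open ArithmeticFunction.Moebius

lemma moebius_summable : Summable fun d : ℕ => (μ d : ℝ) / (d : ℝ) ^ 2 := by
  apply Summable.of_abs
  apply Summable.of_nonneg_of_le (fun d => abs_nonneg _) (fun d => ?_)
    (Real.summable_one_div_nat_pow.mpr one_lt_two)
  rcases Nat.eq_zero_or_pos d with rfl | hd
  · simp
  rw [abs_div, abs_of_nonneg (by positivity : (0:ℝ) ≤ (d:ℝ)^2),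
    div_le_div_iff_of_pos_right (by positivity), ← Int.cast_abs]
  exact_mod_cast abs_moebius_le_one

lemma moebius_tsum : ∑' d : ℕ, (μ d : ℝ) / (d : ℝ) ^ 2 = 6 / Real.pi ^ 2 := by
  have h2 : (1 : ℝ) < (2 : ℂ).re := by norm_num
  have hL : LSeries ↗μ 2 = (6 : ℂ) / (Real.pi : ℂ) ^ 2 := by
    have h := LSeries_zeta_mul_Lseries_moebius h2
    rw [LSeries_zeta_eq_riemannZeta h2, riemannZeta_two] at h
    have hpi : ((Real.pi : ℂ)) ≠ 0 := by
      simp [Complex.ofReal_ne_zero, Real.pi_ne_zero]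
    rw [eq_div_iff (pow_ne_zero 2 hpi)]
    field_simp at h
    linear_combination h
  have key : ((∑' d : ℕ, (μ d : ℝ) / (d : ℝ) ^ 2 : ℝ) : ℂ) = (6 : ℂ) / (Real.pi : ℂ) ^ 2 := by
    rw [Complex.ofReal_tsum, ← hL, LSeries]
    refine tsum_congr fun n => ?_
    rcases Nat.eq_zero_or_pos n with rfl | hn
    · simp [LSeries.term_def]
    · rw [LSeries.term_def, if_neg hn.ne']
      push_cast
      rw [show (2 : ℂ) = ((2 : ℕ) : ℂ) by norm_num, Complex.cpow_natCast]
  rw [show (6 : ℂ) / (Real.pi:ℂ)^2 = ((6 / Real.pi ^ 2 : ℝ) : ℂ) by push_cast; ring] at key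
  exact_mod_cast key

lemma totient_moebius (n : ℕ) (hn : 0 < n) :
    (Nat.totient n : ℝ) = ∑ p ∈ n.divisorsAntidiagonal, (μ p.1 : ℝ) * p.2 := by
  have h := (sum_eq_iff_sum_mul_moebius_eq (R := ℝ)
      (f := fun n => (Nat.totient n : ℝ)) (g := fun n => (n : ℝ))).mp ?_ n hn
  · exact h.symm
  · intro m hm
    exact_mod_cast congrArg (Nat.cast (R := ℝ)) (Nat.sum_totient m)

lemma key_identity (N : ℕ) :
    (∑ q ∈ Finset.Icc 1 N, (Nat.totient q : ℝ)) =
      ∑ d ∈ Finset.Icc 1 N, (μ d : ℝ) * (∑ m ∈ Finset.Icc 1 (N / d), (m : ℝ)) := by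
  have h1 : (∑ q ∈ Finset.Icc 1 N, (Nat.totient q : ℝ)) =
      ∑ q ∈ Finset.Icc 1 N, ∑ p ∈ q.divisorsAntidiagonal, (μ p.1 : ℝ) * p.2 :=
    Finset.sum_congr rfl fun q hq => totient_moebius q (Finset.mem_Icc.mp hq).1
  rw [h1]
  rw [← Finset.sum_biUnion ?disj]
  case disj =>
    intro a ha b hb hab
    simp only [Finset.disjoint_left]
    intro p hpa hpb
    rw [Nat.mem_divisorsAntidiagonal] at hpa hpb
    exact hab (hpa.1 ▸ hpb.1 ▸ rfl)
  have hset : (Finset.Icc 1 N).biUnion Nat.divisorsAntidiagonal =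
      (Finset.Icc 1 N ×ˢ Finset.Icc 1 N).filter (fun p => p.1 * p.2 ≤ N) := by
    ext p
    simp only [Finset.mem_biUnion, Finset.mem_Icc, Nat.mem_divisorsAntidiagonal,
      Finset.mem_filter, Finset.mem_product]
    constructor
    · rintro ⟨q, ⟨hq1, hqN⟩, hpq, hq⟩
      subst hpq
      rw [mul_ne_zero_iff] at hq
      have h1 : 0 < p.1 := Nat.pos_of_ne_zero hq.1
      have h2 : 0 < p.2 := Nat.pos_of_ne_zero hq.2
      exact ⟨⟨⟨h1, le_trans (Nat.le_mul_of_pos_right _ h2) hqN⟩,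
        h2, le_trans (Nat.le_mul_of_pos_left _ h1) hqN⟩, hqN⟩
    · rintro ⟨⟨⟨h1, -⟩, h2, -⟩, hle⟩
      exact ⟨p.1 * p.2, ⟨Nat.one_le_iff_ne_zero.mpr (by positivity), hle⟩, rfl, by positivity⟩
  rw [hset]
  rw [Finset.sum_filter, Finset.sum_product]
  refine Finset.sum_congr rfl fun d hd => ?_
  rw [Finset.mem_Icc] at hd
  have hd1 : 0 < d := hd.1
  rw [Finset.mul_sum, ← Finset.sum_filter]
  have : Finset.filter (fun m => d * m ≤ N) (Finset.Icc 1 N) = Finset.Icc 1 (N / d) := by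
    ext m
    simp only [Finset.mem_filter, Finset.mem_Icc, Nat.le_div_iff_mul_le hd1]
    constructor
    · rintro ⟨⟨h1, -⟩, h⟩; exact ⟨h1, mul_comm m d ▸ h⟩
    · rintro ⟨h1, h⟩
      refine ⟨⟨h1, ?_⟩, mul_comm d m ▸ h⟩
      calc m ≤ m * d := Nat.le_mul_of_pos_right _ hd1
        _ ≤ N := h
  rw [this]

lemma gauss (k : ℕ) : (∑ m ∈ Finset.Icc 1 k, (m : ℝ)) = (k : ℝ) * (k + 1) / 2 := by
  induction k with
  | zero => simp
  | succ n ih =>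
    rw [Finset.sum_Icc_succ_top (by omega), ih]
    push_cast
    ring

lemma term_bound (N d : ℕ) (hd : 1 ≤ d) (hdN : d ≤ N) :
    |(μ d : ℝ) * (((N / d : ℕ) : ℝ) * ((N / d : ℕ) + 1) / 2) / (N : ℝ) ^ 2
      - (μ d : ℝ) / (2 * (d : ℝ) ^ 2)| ≤ 3 / (2 * (d : ℝ) * (N : ℝ)) := by
  have hmu : |(μ d : ℝ)| ≤ 1 := by
    rw [← Int.cast_abs]; exact_mod_cast abs_moebius_le_one
  have hdR : (1 : ℝ) ≤ d := by exact_mod_cast hd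
  have hNR : (d : ℝ) ≤ N := by exact_mod_cast hdN
  have hN1 : (1:ℝ) ≤ N := le_trans hdR hNR
  have hq0 : (0:ℝ) ≤ ((N / d : ℕ) : ℝ) := Nat.cast_nonneg _
  have hql : ((N / d : ℕ) : ℝ) * d ≤ N := by exact_mod_cast Nat.div_mul_le_self N d
  have hqu : (N : ℝ) < (((N / d : ℕ) : ℝ) + 1) * d := by
    have h1 : d * (N / d) + N % d = N := Nat.div_add_mod N d
    have h2 : N % d < d := Nat.mod_lt N (by omega)
    have h3 : N < (N / d + 1) * d := by
      rw [Nat.mul_comm] at h1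
      rw [Nat.succ_mul]
      omega
    exact_mod_cast h3
  set q : ℝ := ((N / d : ℕ) : ℝ)
  have key2 : |(d:ℝ)^2 * (q * (q+1)) - (N:ℝ)^2| ≤ 3 * (d:ℝ) * (N:ℝ) := by
    rw [abs_le]
    constructor
    · nlinarith [hqu, hql, hq0, hdR, hNR, hN1, sq_nonneg ((q+1)*(d:ℝ) - N), sq_nonneg (q*(d:ℝ) - N)]
    · nlinarith [mul_le_mul hql hql (by positivity) (by positivity)]
  have heq : q * (q + 1) / 2 / (N : ℝ) ^ 2 - 1 / (2 * (d : ℝ) ^ 2)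
      = ((d:ℝ)^2 * (q * (q+1)) - (N:ℝ)^2) / (2 * (N:ℝ)^2 * (d:ℝ)^2) := by
    field_simp
  have key : |q * (q + 1) / 2 / (N : ℝ) ^ 2 - 1 / (2 * (d : ℝ) ^ 2)|
      ≤ 3 / (2 * (d:ℝ) * (N:ℝ)) := by
    rw [heq, abs_div, abs_of_pos (by positivity : (0:ℝ) < 2 * (N:ℝ)^2 * (d:ℝ)^2),
      div_le_div_iff₀ (by positivity) (by positivity)]
    nlinarith [abs_nonneg ((d:ℝ)^2 * (q * (q+1)) - (N:ℝ)^2), key2]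
  calc |(μ d : ℝ) * (q * (q + 1) / 2) / (N : ℝ) ^ 2 - (μ d : ℝ) / (2 * (d : ℝ) ^ 2)|
      = |(μ d : ℝ)| * |q * (q + 1) / 2 / (N : ℝ) ^ 2 - 1 / (2 * (d : ℝ) ^ 2)| := by
        rw [← abs_mul]; ring_nf
    _ ≤ 1 * (3 / (2 * (d:ℝ) * (N:ℝ))) := mul_le_mul hmu key (abs_nonneg _) zero_le_one
    _ = 3 / (2 * (d:ℝ) * (N:ℝ)) := one_mul _

lemma icc_eq_range_sum (f : ℕ → ℝ) (hf : f 0 = 0) (N : ℕ) :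
    ∑ d ∈ Finset.Icc 1 N, f d = ∑ d ∈ Finset.range (N + 1), f d := by
  refine (Finset.sum_subset (fun x hx => ?_) (fun x hx hx' => ?_)).symm.symm
  · rw [Finset.mem_Icc] at hx; rw [Finset.mem_range]; omega
  · rw [Finset.mem_range] at hx; rw [Finset.mem_Icc] at hx'
    have : x = 0 := by omega
    rw [this, hf]

lemma P_tendsto : Tendsto (fun N : ℕ => ∑ d ∈ Finset.Icc 1 N, (μ d : ℝ) / (d : ℝ) ^ 2)
    atTop (𝓝 (6 / Real.pi ^ 2)) := by
  have h := moebius_summable.hasSum.tendsto_sum_nat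
  rw [moebius_tsum] at h
  have h2 := h.comp (tendsto_add_atTop_nat 1)
  refine h2.congr fun N => ?_
  exact (icc_eq_range_sum _ (by simp) N).symm

lemma E_tendsto : Tendsto (fun N : ℕ => (∑ d ∈ Finset.Icc 1 N, 1 / (d : ℝ)) / N)
    atTop (𝓝 0) := by
  have hc : Tendsto (fun n : ℕ => (∑ i ∈ Finset.range n, 1 / (i : ℝ)) / n) atTop (𝓝 0) := by
    have := Filter.Tendsto.cesaro tendsto_one_div_atTop_nhds_zero_nat
    refine this.congr fun n => ?_
    rw [inv_mul_eq_div]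
  have h2 := hc.comp (tendsto_add_atTop_nat 1)
  have h3 : Tendsto (fun N : ℕ => ((N : ℝ) + 1) / N) atTop (𝓝 1) := by
    have := Filter.Tendsto.add_const (1:ℝ) tendsto_one_div_atTop_nhds_zero_nat
    rw [zero_add] at this
    apply this.congr'
    filter_upwards [eventually_ne_atTop 0] with N hN
    field_simp
    ring
  have h4 := h2.mul h3
  rw [zero_mul] at h4
  apply h4.congr'
  filter_upwards [eventually_ne_atTop 0] with N hN
  have hN' : (N : ℝ) ≠ 0 := Nat.cast_ne_zero.mpr hN
  simp only [Function.comp]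
  rw [icc_eq_range_sum (fun d => 1/(d:ℝ)) (by simp) N]
  field_simp
  rw [Nat.cast_add, Nat.cast_one]

lemma S_tendsto : Tendsto (fun N : ℕ =>
    (∑ q ∈ Finset.Icc 1 N, (Nat.totient q : ℝ)) / (N : ℝ) ^ 2)
    atTop (𝓝 (3 / Real.pi ^ 2)) := by
  set P : ℕ → ℝ := fun N => ∑ d ∈ Finset.Icc 1 N, (μ d : ℝ) / (2 * (d : ℝ) ^ 2) with hP
  have hPlim : Tendsto P atTop (𝓝 (3 / Real.pi ^ 2)) := by
    have := P_tendsto.const_mul (1/2 : ℝ)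
    have heq : (1/2 : ℝ) * (6 / Real.pi ^ 2) = 3 / Real.pi ^ 2 := by ring
    rw [heq] at this
    refine this.congr fun N => ?_
    rw [Finset.mul_sum]
    exact Finset.sum_congr rfl fun d _ => by ring
  set S : ℕ → ℝ := fun N => (∑ q ∈ Finset.Icc 1 N, (Nat.totient q : ℝ)) / (N : ℝ) ^ 2 with hS
  have hdiff : Tendsto (fun N => S N - P N) atTop (𝓝 0) := by
    have hg : Tendsto (fun N : ℕ => (3/2 : ℝ) * ((∑ d ∈ Finset.Icc 1 N, 1 / (d : ℝ)) / N))
        atTop (𝓝 0) := by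
      have := E_tendsto.const_mul (3/2 : ℝ)
      rwa [mul_zero] at this
    refine squeeze_zero_norm' ?_ hg
    filter_upwards [eventually_ge_atTop 1] with N hN
    have hN0 : (N : ℝ) ≠ 0 := by positivity
    have hSN : S N = ∑ d ∈ Finset.Icc 1 N,
        (μ d : ℝ) * (((N / d : ℕ) : ℝ) * ((N / d : ℕ) + 1) / 2) / (N : ℝ) ^ 2 := by
      rw [hS]
      simp only
      rw [key_identity N, Finset.sum_div]
      exact Finset.sum_congr rfl fun d _ => by rw [gauss]
    rw [Real.norm_eq_abs, hSN, hP, ← Finset.sum_sub_distrib]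
    calc |∑ d ∈ Finset.Icc 1 N,
            ((μ d : ℝ) * (((N / d : ℕ) : ℝ) * ((N / d : ℕ) + 1) / 2) / (N : ℝ) ^ 2
              - (μ d : ℝ) / (2 * (d : ℝ) ^ 2))|
        ≤ ∑ d ∈ Finset.Icc 1 N, |(μ d : ℝ) * (((N / d : ℕ) : ℝ) * ((N / d : ℕ) + 1) / 2) / (N : ℝ) ^ 2
              - (μ d : ℝ) / (2 * (d : ℝ) ^ 2)| := Finset.abs_sum_le_sum_abs _ _
      _ ≤ ∑ d ∈ Finset.Icc 1 N, 3 / (2 * (d : ℝ) * (N : ℝ)) := by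
          refine Finset.sum_le_sum fun d hd => ?_
          rw [Finset.mem_Icc] at hd
          exact term_bound N d hd.1 hd.2
      _ = (3/2 : ℝ) * ((∑ d ∈ Finset.Icc 1 N, 1 / (d : ℝ)) / N) := by
          rw [Finset.sum_div, Finset.mul_sum]
          exact Finset.sum_congr rfl fun d _ => by
            rw [div_div]
            ring
  have := hdiff.add hPlim
  rw [zero_add] at this
  refine this.congr fun N => ?_
  ring

theorem stmt_16 :
    Tendsto (fun x : ℝ => (∑ q ∈ Finset.Icc 1 ⌊x⌋₊, (Nat.totient q : ℝ)) /
      (3 * x ^ 2 / Real.pi ^ 2)) atTop (𝓝 1) := by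
  have h1 : Tendsto (fun x : ℝ =>
      (∑ q ∈ Finset.Icc 1 ⌊x⌋₊, (Nat.totient q : ℝ)) / ((⌊x⌋₊ : ℝ)) ^ 2)
      atTop (𝓝 (3 / Real.pi ^ 2)) := S_tendsto.comp tendsto_nat_floor_atTop
  have h2 : Tendsto (fun x : ℝ => ((⌊x⌋₊ : ℝ) / x) ^ 2) atTop (𝓝 1) := by
    have := (tendsto_nat_floor_div_atTop (R := ℝ)).pow 2
    rwa [one_pow] at this
  have h3 := (h1.mul h2).mul_const (Real.pi ^ 2 / 3)
  have hpi : Real.pi ≠ 0 := Real.pi_ne_zero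
  have hlim : 3 / Real.pi ^ 2 * 1 * (Real.pi ^ 2 / 3) = 1 := by
    field_simp
  rw [hlim] at h3
  refine h3.congr' ?_
  filter_upwards [eventually_ge_atTop (1 : ℝ)] with x hx
  have hx0 : (0:ℝ) < x := lt_of_lt_of_le one_pos hx
  have hfl : 1 ≤ ⌊x⌋₊ := Nat.le_floor (by exact_mod_cast hx)
  have hfl0 : ((⌊x⌋₊ : ℝ)) ≠ 0 := by
    have : (1:ℝ) ≤ (⌊x⌋₊ : ℝ) := by exact_mod_cast hfl
    linarith
  have hp2 : Real.pi ^ 2 ≠ 0 := pow_ne_zero 2 Real.pi_ne_zero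
  have hne : 3 * x ^ 2 / Real.pi ^ 2 ≠ 0 := by positivity
  rw [eq_div_iff hne, div_pow]
  field_simp
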